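/- arXiv:1912.12454 — 2 statements merged into one kernel-verified Lean document; each statement's English description precedes it below -/
import Mathlib

section
/- Let U ⊆ X be open convex and f ∈ C^{1u}(U,Y). If f is weakly p-sequentially continuous, then f′(x) is a p-convergent operator for every x ∈ U, i.e., f′(U) ⊆ C_p(X,Y). -/
open Filter Topology Metric Set
open scoped ENNReal NNReal

section Defs

variable {X Y : Type*} [NormedAddCommGroup X] [NormedSpace ℝ X]
  [NormedAddCommGroup Y] [NormedSpace ℝ Y]

/-- A sequence `(x n)` in `X` is weakly `p`-summable if `(f (x n))ₙ ∈ ℓ_p` for every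
continuous linear functional `f` (for `p = ∞`, this means `(f (x n))ₙ ∈ c₀`). -/
def WeaklyLpSummable (p : ℝ≥0∞) (x : ℕ → X) : Prop :=
  ∀ f : X →L[ℝ] ℝ,
    if p = ⊤ then Filter.Tendsto (fun n => f (x n)) Filter.atTop (nhds 0)
    else Memℓp (fun n => f (x n)) p

/-- A sequence is weakly `p`-Cauchy if all difference sequences along pairs of strictly
monotone index sequences are weakly `p`-summable. -/
def WeaklyLpCauchy (p : ℝ≥0∞) (x : ℕ → X) : Prop :=
  ∀ m k : ℕ → ℕ, StrictMono m → StrictMono k →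
    WeaklyLpSummable p (fun i => x (m i) - x (k i))

/-- `(x n)` is weakly `p`-convergent to `x₀` if `(x n - x₀)` is weakly `p`-summable. -/
def WeaklyLpConvergentTo (p : ℝ≥0∞) (x : ℕ → X) (x₀ : X) : Prop :=
  WeaklyLpSummable p (fun n => x n - x₀)

/-- A set `K ⊆ L(X,Y)` is uniformly `p`-convergent if `lim_n sup_{T ∈ K} ‖T (x n)‖ = 0`
for every weakly `p`-summable sequence `(x n)`. -/
def UniformlyPConvergent (p : ℝ≥0∞) (K : Set (X →L[ℝ] Y)) : Prop :=
  ∀ x : ℕ → X, WeaklyLpSummable p x →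
    ∀ ε > 0, ∃ N : ℕ, ∀ n ≥ N, ∀ T ∈ K, ‖T (x n)‖ < ε

/-- `B` is `U`-bounded: contained in `U`, bounded, and at positive distance from `∂U`. -/
def UBounded (U B : Set X) : Prop :=
  B ⊆ U ∧ Bornology.IsBounded B ∧ ∃ r > 0, ∀ b ∈ B, Metric.ball b r ⊆ U

/-- A sequence is `U`-bounded if its range is a `U`-bounded set. -/
def UBoundedSeq (U : Set X) (x : ℕ → X) : Prop :=
  UBounded U (Set.range x)

/-- `f ∈ C^{1u}(U,Y)`: `f` is differentiable on `U` with derivative `f'` which is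
uniformly continuous on `U`-bounded subsets of `U`. -/
def C1u (U : Set X) (f : X → Y) (f' : X → X →L[ℝ] Y) : Prop :=
  (∀ x ∈ U, HasFDerivAt f (f' x) x) ∧
  ∀ B : Set X, UBounded U B → UniformContinuousOn f' B

/-- `T` is a `p`-convergent operator: it maps weakly `p`-summable sequences to norm-null
sequences. -/
def PConvergentOp (p : ℝ≥0∞) (T : X →L[ℝ] Y) : Prop :=
  ∀ x : ℕ → X, WeaklyLpSummable p x →
    Filter.Tendsto (fun n => ‖T (x n)‖) Filter.atTop (nhds 0)

/-- `f` is weakly `p`-sequentially continuous on `U`: it maps `U`-bounded weakly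
`p`-Cauchy sequences to norm convergent sequences. -/
def WeaklyPSeqCont (p : ℝ≥0∞) (U : Set X) (f : X → Y) : Prop :=
  ∀ x : ℕ → X, UBoundedSeq U x → WeaklyLpCauchy p x →
    ∃ l : Y, Filter.Tendsto (fun n => f (x n)) Filter.atTop (nhds l)

/-- `K` is weakly `p`-precompact: every sequence in `K` has a weakly `p`-Cauchy
subsequence. -/
def WeaklyPPrecompact (p : ℝ≥0∞) (K : Set X) : Prop :=
  ∀ x : ℕ → X, (∀ n, x n ∈ K) →
    ∃ m : ℕ → ℕ, StrictMono m ∧ WeaklyLpCauchy p (fun i => x (m i))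

end Defs

section Helpers

variable {X : Type*} [NormedAddCommGroup X] [NormedSpace ℝ X]

lemma wls_sub {p : ℝ≥0∞} {x y : ℕ → X}
    (hx : WeaklyLpSummable p x) (hy : WeaklyLpSummable p y) :
    WeaklyLpSummable p fun n => x n - y n := by
  intro g
  have h1 := hx g
  have h2 := hy g
  by_cases hpt : p = ⊤
  · rw [if_pos hpt] at h1 h2 ⊢
    simpa [map_sub] using h1.sub h2
  · rw [if_neg hpt] at h1 h2 ⊢
    have h3 := h1.sub h2
    simp only [map_sub]
    exact h3

lemma wls_smul {p : ℝ≥0∞} {x : ℕ → X} (hx : WeaklyLpSummable p x) (t : ℝ) :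
    WeaklyLpSummable p fun n => t • x n := by
  intro g
  have h1 := hx g
  by_cases hpt : p = ⊤
  · rw [if_pos hpt] at h1 ⊢
    simpa [map_smul, smul_eq_mul] using h1.const_mul t
  · rw [if_neg hpt] at h1 ⊢
    simpa only [map_smul, smul_eq_mul] using h1.const_mul t

lemma wls_comp {p : ℝ≥0∞} (hp : 1 ≤ p) {x : ℕ → X} (hx : WeaklyLpSummable p x)
    {m : ℕ → ℕ} (hm : StrictMono m) : WeaklyLpSummable p fun i => x (m i) := by
  intro g
  have h1 := hx g
  by_cases hpt : p = ⊤
  · rw [if_pos hpt] at h1 ⊢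
    exact h1.comp hm.tendsto_atTop
  · rw [if_neg hpt] at h1 ⊢
    have hq : 0 < p.toReal := ENNReal.toReal_pos (zero_lt_one.trans_le hp).ne' hpt
    exact memℓp_gen ((h1.summable hq).comp_injective hm.injective)

lemma wls_interleave {p : ℝ≥0∞} (hp : 1 ≤ p) {x : ℕ → X} (hx : WeaklyLpSummable p x) :
    WeaklyLpSummable p fun j => if Even j then x (j / 2) else (0 : X) := by
  intro g
  have h1 := hx g
  have hdiv : Tendsto (fun j : ℕ => j / 2) atTop atTop := by
    apply tendsto_atTop_atTop.2
    intro b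
    exact ⟨2 * b, fun a ha => Nat.le_div_iff_mul_le two_pos |>.2 (by omega)⟩
  by_cases hpt : p = ⊤
  · rw [if_pos hpt] at h1 ⊢
    have hb : Tendsto (fun j : ℕ => ‖g (x (j / 2))‖) atTop (nhds 0) := by
      simpa using (h1.comp hdiv).norm
    refine squeeze_zero_norm (fun j => ?_) hb
    by_cases hj : Even j <;> simp [hj]
  · rw [if_neg hpt] at h1 ⊢
    have hq : 0 < p.toReal := ENNReal.toReal_pos (zero_lt_one.trans_le hp).ne' hpt
    apply memℓp_gen
    have hsum := h1.summable hq
    have hinj : Function.Injective (fun n : ℕ => 2 * n) := fun a b h =>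
      Nat.eq_of_mul_eq_mul_left two_pos h
    have hzero : ∀ j ∉ Set.range (fun n : ℕ => 2 * n),
        ‖g (if Even j then x (j / 2) else (0 : X))‖ ^ p.toReal = 0 := by
      intro j hj
      have hodd : ¬ Even j := by
        intro ⟨r, hr⟩
        exact hj ⟨r, by show 2 * r = j; omega⟩
      simp [hodd, Real.zero_rpow hq.ne']
    have hcomp : Summable ((fun j => ‖g (if Even j then x (j / 2) else (0 : X))‖ ^ p.toReal)
        ∘ (fun n : ℕ => 2 * n)) := by
      have : ∀ n : ℕ, ((fun j => ‖g (if Even j then x (j / 2) else (0 : X))‖ ^ p.toReal)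
          ∘ (fun n : ℕ => 2 * n)) n = ‖g (x n)‖ ^ p.toReal := by
        intro n
        have he : Even (2 * n) := ⟨n, two_mul n⟩
        simp [Function.comp, he, Nat.mul_div_cancel_left n two_pos]
      exact (funext this) ▸ hsum
    exact (Function.Injective.summable_iff hinj hzero).mp hcomp

lemma wls_bounded {p : ℝ≥0∞} [CompleteSpace X] {x : ℕ → X} (hx : WeaklyLpSummable p x) :
    ∃ M : ℝ, ∀ n, ‖x n‖ ≤ M := by
  have hpt : ∀ g : X →L[ℝ] ℝ, ∃ C, ∀ n, ‖(NormedSpace.inclusionInDoubleDual ℝ X (x n)) g‖ ≤ C := by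
    intro g
    have h1 := hx g
    by_cases hp : p = ⊤
    · rw [if_pos hp] at h1
      obtain ⟨C, hC⟩ := h1.norm.bddAbove_range
      exact ⟨C, fun n => by simpa [NormedSpace.dual_def] using hC ⟨n, rfl⟩⟩
    · rw [if_neg hp] at h1
      obtain ⟨C, hC⟩ := memℓp_infty_iff.1 (h1.of_exponent_ge le_top)
      exact ⟨C, fun n => by simpa [NormedSpace.dual_def] using hC ⟨n, rfl⟩⟩
  obtain ⟨C, hC⟩ := banach_steinhaus hpt
  refine ⟨C, fun n => ?_⟩
  have := (NormedSpace.inclusionInDoubleDualLi ℝ (E := X)).norm_map (x n)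
  rw [← this]
  exact hC n

end Helpers

set_option maxHeartbeats 4000000 in
/-- If `f ∈ C^{1u}(U,Y)` is weakly `p`-sequentially continuous, then `f'(x)` is a
`p`-convergent operator for every `x ∈ U`. -/
theorem weaklyPSeqCont_deriv_pConvergent
    {X Y : Type*} [NormedAddCommGroup X] [NormedSpace ℝ X] [CompleteSpace X]
    [NormedAddCommGroup Y] [NormedSpace ℝ Y] [CompleteSpace Y]
    (p : ℝ≥0∞) (hp : 1 ≤ p)
    (U : Set X) (hU : IsOpen U) (hUc : Convex ℝ U)
    (f : X → Y) (f' : X → X →L[ℝ] Y) (hf : C1u U f f')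
    (hwsc : WeaklyPSeqCont p U f) :
    ∀ x ∈ U, PConvergentOp p (f' x) := by
  intro x hxU xs hxs
  obtain ⟨M₀, hM₀⟩ := wls_bounded hxs
  set M : ℝ := max M₀ 1 with hM
  have hM1 : (1 : ℝ) ≤ M := le_max_right _ _
  have hMpos : (0 : ℝ) < M := lt_of_lt_of_le one_pos hM1
  have hMb : ∀ n, ‖xs n‖ ≤ M := fun n => (hM₀ n).trans (le_max_left _ _)
  obtain ⟨R, hRpos, hRU⟩ := Metric.isOpen_iff.1 hU x hxU
  set r : ℝ := R / 4 with hr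
  have hrpos : 0 < r := by positivity
  set B : Set X := Metric.closedBall x (2 * r) with hB
  have hBU : B ⊆ U := by
    intro y hy
    apply hRU
    have h1 : dist y x ≤ 2 * r := Metric.mem_closedBall.1 hy
    exact Metric.mem_ball.2 (lt_of_le_of_lt h1 (by rw [hr]; linarith))
  have hBprop : ∀ b ∈ B, Metric.ball b r ⊆ U := by
    intro b hb y hy
    apply hRU
    have h1 : dist y b < r := Metric.mem_ball.1 hy
    have h2 : dist b x ≤ 2 * r := Metric.mem_closedBall.1 hb
    refine Metric.mem_ball.2 ?_
    calc dist y x ≤ dist y b + dist b x := dist_triangle _ _ _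
      _ < r + 2 * r := by linarith
      _ < R := by rw [hr]; linarith [hRpos]
  have hBbdd : UBounded U B := ⟨hBU, Metric.isBounded_closedBall, r, hrpos, hBprop⟩
  have hUC := hf.2 B hBbdd
  rw [Metric.uniformContinuousOn_iff] at hUC
  rw [Metric.tendsto_atTop]
  intro ε hε
  set ε' : ℝ := ε / (4 * M) with hε'
  have hε'pos : 0 < ε' := by positivity
  obtain ⟨δ, hδpos, hδ⟩ := hUC ε' hε'pos
  set t : ℝ := min r δ / (2 * M) with ht
  have hminpos : 0 < min r δ := lt_min hrpos hδpos
  have htpos : 0 < t := by positivity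
  have hMne : (M : ℝ) ≠ 0 := ne_of_gt hMpos
  have htM : t * M = min r δ / 2 := by
    rw [ht]; field_simp
  have htMr : t * M < r := by
    rw [htM]
    have h1 : min r δ ≤ r := min_le_left _ _
    linarith
  have htMδ : t * M < δ := by
    rw [htM]
    have h1 : min r δ ≤ δ := min_le_right _ _
    linarith
  have htMpos : 0 < t * M := mul_pos htpos hMpos
  -- the auxiliary sequence
  set w : ℕ → X := fun j => if Even j then t • xs (j / 2) else (0 : X) with hw
  set z : ℕ → X := fun j => x + w j with hz
  have hwnorm : ∀ j, ‖w j‖ ≤ t * M := by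
    intro j
    rw [hw]
    by_cases hj : Even j
    · simp only [hj, if_true]
      rw [norm_smul, Real.norm_eq_abs, abs_of_pos htpos]
      exact mul_le_mul_of_nonneg_left (hMb _) htpos.le
    · simp only [hj, if_false, norm_zero]
      exact htMpos.le
  have hzball : ∀ j, z j ∈ Metric.closedBall x (t * M) := by
    intro j
    rw [Metric.mem_closedBall, dist_eq_norm, hz]
    simpa using hwnorm j
  have hballB : Metric.closedBall x (t * M) ⊆ B := by
    rw [hB]
    exact Metric.closedBall_subset_closedBall (by linarith)
  have hzB : ∀ j, z j ∈ B := fun j => hballB (hzball j)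
  have hzU : UBoundedSeq U z := by
    refine ⟨?_, ?_, r, hrpos, ?_⟩
    · rintro - ⟨j, rfl⟩; exact hBU (hzB j)
    · exact Metric.isBounded_closedBall.subset (by rintro - ⟨j, rfl⟩; exact hzB j)
    · rintro - ⟨j, rfl⟩; exact hBprop _ (hzB j)
  have hwsummable : WeaklyLpSummable p w := by
    rw [hw]
    exact wls_interleave (x := fun n => t • xs n) hp (wls_smul hxs t)
  have hzC : WeaklyLpCauchy p z := by
    intro m k hm hk
    have h1 := wls_sub (wls_comp hp hwsummable hm) (wls_comp hp hwsummable hk)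
    have heq : (fun i => z (m i) - z (k i)) = fun i => w (m i) - w (k i) := by
      funext i
      rw [hz]
      exact add_sub_add_left_eq_sub _ _ _
    rw [heq]
    exact h1
  obtain ⟨l, hl⟩ := hwsc z hzU hzC
  -- odd subsequence is constant f x
  have hsm1 : StrictMono (fun j : ℕ => 2 * j + 1) := fun a b h => by
    show 2 * a + 1 < 2 * b + 1; omega
  have hodd : Tendsto (fun j => f (z (2 * j + 1))) atTop (nhds l) :=
    hl.comp hsm1.tendsto_atTop
  have hzodd : ∀ j, z (2 * j + 1) = x := by
    intro j
    have hne : ¬ Even (2 * j + 1) := by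
      intro ⟨s, hs⟩; omega
    rw [hz, hw]
    simp [hne]
  have hlfx : l = f x := by
    have hconst : (fun j => f (z (2 * j + 1))) = fun _ => f x := by
      funext j; rw [hzodd j]
    rw [hconst] at hodd
    exact tendsto_nhds_unique hodd tendsto_const_nhds
  have hsm2 : StrictMono (fun j : ℕ => 2 * j) := fun a b h => by
    show 2 * a < 2 * b; omega
  have hzeven : ∀ n, z (2 * n) = x + t • xs n := by
    intro n
    have he : Even (2 * n) := ⟨n, two_mul n⟩
    rw [hz, hw]
    simp [he, Nat.mul_div_cancel_left n two_pos]
  have heven : Tendsto (fun n => f (x + t • xs n)) atTop (nhds (f x)) := by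
    have h1 : Tendsto (fun n => f (z (2 * n))) atTop (nhds l) := hl.comp hsm2.tendsto_atTop
    rw [hlfx] at h1
    have heq : (fun n => f (z (2 * n))) = fun n => f (x + t • xs n) := by
      funext n; rw [hzeven n]
    rwa [heq] at h1
  -- mean value estimate on the small ball
  set s : Set X := Metric.closedBall x (t * M) with hs
  have hsU : s ⊆ U := fun y hy => hBU (hballB hy)
  have hder : ∀ y ∈ s, HasFDerivWithinAt f (f' y) s y := fun y hy =>
    (hf.1 y (hsU hy)).hasFDerivWithinAt
  have hbound : ∀ y ∈ s, ‖f' y - f' x‖ ≤ ε' := by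
    intro y hy
    have h1 : y ∈ B := hballB hy
    have h2 : x ∈ B := Metric.mem_closedBall_self (by linarith)
    have h3 : dist y x < δ := lt_of_le_of_lt (Metric.mem_closedBall.1 hy) htMδ
    have h4 := hδ y h1 x h2 h3
    rw [dist_eq_norm] at h4
    exact h4.le
  have hxmem : x ∈ s := Metric.mem_closedBall_self htMpos.le
  have hεN : 0 < ε' * (t * M) := mul_pos hε'pos htMpos
  obtain ⟨N, hN⟩ := (Metric.tendsto_atTop.1 heven) (ε' * (t * M)) hεN
  refine ⟨N, fun n hn => ?_⟩
  have hymem : x + t • xs n ∈ s := by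
    rw [hs, Metric.mem_closedBall, dist_eq_norm]
    have : x + t • xs n - x = t • xs n := by abel
    rw [this, norm_smul, Real.norm_eq_abs, abs_of_pos htpos]
    exact mul_le_mul_of_nonneg_left (hMb _) htpos.le
  have hmvt := (convex_closedBall x (t * M)).norm_image_sub_le_of_norm_hasFDerivWithin_le'
    (φ := f' x) hder hbound hxmem hymem
  have hsub : x + t • xs n - x = t • xs n := by abel
  rw [hsub] at hmvt
  have hnorm1 : ‖t • xs n‖ ≤ t * M := by
    rw [norm_smul, Real.norm_eq_abs, abs_of_pos htpos]
    exact mul_le_mul_of_nonneg_left (hMb _) htpos.le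
  have hmvt2 : ‖f (x + t • xs n) - f x - (f' x) (t • xs n)‖ ≤ ε' * (t * M) :=
    hmvt.trans (mul_le_mul_of_nonneg_left hnorm1 hε'pos.le)
  have hfn := hN n hn
  rw [dist_eq_norm] at hfn
  have htriangle : ‖(f' x) (t • xs n)‖ ≤
      ‖f (x + t • xs n) - f x - (f' x) (t • xs n)‖ + ‖f (x + t • xs n) - f x‖ := by
    have h := norm_sub_le (f (x + t • xs n) - f x)
      (f (x + t • xs n) - f x - (f' x) (t • xs n))
    have he : f (x + t • xs n) - f x - (f (x + t • xs n) - f x - (f' x) (t • xs n))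
        = (f' x) (t • xs n) := by abel
    rw [he] at h
    linarith
  have hkey : ‖(f' x) (t • xs n)‖ < 2 * (ε' * (t * M)) := by
    have h2 := add_lt_add_of_le_of_lt hmvt2 hfn
    have h3 := htriangle
    linarith
  have hsmul : (f' x) (t • xs n) = t • (f' x) (xs n) := by
    rw [map_smul]
  rw [hsmul, norm_smul, Real.norm_eq_abs, abs_of_pos htpos] at hkey
  have hfinal : ‖(f' x) (xs n)‖ < 2 * (ε' * M) := by
    have h1 : t * ‖(f' x) (xs n)‖ < t * (2 * (ε' * M)) := by
      calc t * ‖(f' x) (xs n)‖ < 2 * (ε' * (t * M)) := hkey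
        _ = t * (2 * (ε' * M)) := by ring
    exact lt_of_mul_lt_mul_left h1 htpos.le
  have h2εM : 2 * (ε' * M) = ε / 2 := by
    rw [hε']; field_simp; ring
  rw [h2εM] at hfinal
  rw [Real.dist_eq, sub_zero, abs_of_nonneg (norm_nonneg _)]
  linarith
end

section
/- Suppose every continuous linear functional is considered as an operator in K(X,ℝ), B_X is weakly p-precompact, U ⊆ X is open convex, f ∈ C^{1u}(U,ℝ) is weakly p-sequentially continuous, and every uniformly p-convergent subset of K(X,ℝ) = X* is uniformly completely continuous (an (L)-set). Then f′ maps U-bounded subsets of U into relatively compact subsets of X*. -/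
open Filter Topology Metric Set
open scoped ENNReal NNReal

section AuxLemmas
set_option linter.unusedSectionVars false

variable {X : Type*} [NormedAddCommGroup X] [NormedSpace ℝ X] {p : ℝ≥0∞}

private lemma aux_toReal_pos (hp : 1 ≤ p) (hp' : p ≠ ⊤) : 0 < p.toReal :=
  ENNReal.toReal_pos (lt_of_lt_of_le zero_lt_one hp).ne' hp'

private lemma aux_memℓp_tendsto_zero (hq : 0 < p.toReal) {f : ℕ → ℝ} (hf : Memℓp f p) :
    Filter.Tendsto f Filter.atTop (nhds 0) := by
  have hs : Filter.Tendsto (fun n => ‖f n‖ ^ p.toReal) Filter.atTop (nhds 0) :=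
    (hf.summable hq).tendsto_atTop_zero
  rw [NormedAddCommGroup.tendsto_nhds_zero]
  intro ε hε
  have h1 : ∀ᶠ n in Filter.atTop, ‖f n‖ ^ p.toReal < ε ^ p.toReal :=
    hs.eventually_lt_const (by positivity)
  filter_upwards [h1] with n hn
  by_contra hcon
  push_neg at hcon
  exact absurd hn (not_lt.2 (Real.rpow_le_rpow hε.le hcon hq.le))

private lemma aux_memℓp_comp (hq : 0 < p.toReal) {f : ℕ → ℝ} (hf : Memℓp f p)
    {σ : ℕ → ℕ} (hσ : StrictMono σ) : Memℓp (fun n => f (σ n)) p := by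
  apply memℓp_gen
  have := (hf.summable hq).comp_injective hσ.injective
  simpa [Function.comp_def] using this

private lemma aux_memℓp_of_le (hq : 0 < p.toReal) {f g : ℕ → ℝ} (hg : Memℓp g p)
    (h : ∀ n, |f n| ≤ |g n|) : Memℓp f p := by
  apply memℓp_gen
  refine Summable.of_nonneg_of_le (fun n => by positivity) (fun n => ?_) (hg.summable hq)
  simp only [Real.norm_eq_abs]
  exact Real.rpow_le_rpow (abs_nonneg _) (h n) hq.le

private lemma aux_memℓp_even_odd (hq : 0 < p.toReal) {f : ℕ → ℝ}
    (he : Memℓp (fun n => f (2 * n)) p) (ho : Memℓp (fun n => f (2 * n + 1)) p) :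
    Memℓp f p := by
  apply memℓp_gen
  have he' : Summable fun n => ‖f (2 * n)‖ ^ p.toReal := he.summable hq
  have ho' : Summable fun n => ‖f (2 * n + 1)‖ ^ p.toReal := ho.summable hq
  exact (HasSum.even_add_odd (f := fun i => ‖f i‖ ^ p.toReal) he'.hasSum ho'.hasSum).summable

private lemma aux_memℓp_add {f g : ℕ → ℝ} (hf : Memℓp f p) (hg : Memℓp g p) :
    Memℓp (fun n => f n + g n) p := by
  have h : (fun n => f n + g n) = f + g := rfl
  rw [h]; exact hf.add hg

private lemma aux_memℓp_sub {f g : ℕ → ℝ} (hf : Memℓp f p) (hg : Memℓp g p) :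
    Memℓp (fun n => f n - g n) p := by
  have h : (fun n => f n - g n) = f + -g := by funext n; simp [sub_eq_add_neg]
  rw [h]; exact hf.add hg.neg

private lemma aux_wls_iff (hp' : p ≠ ⊤) {x : ℕ → X} :
    WeaklyLpSummable p x ↔ ∀ φ : X →L[ℝ] ℝ, Memℓp (fun n => φ (x n)) p := by
  unfold WeaklyLpSummable
  simp [hp']

private lemma aux_wls_tendsto (hp : 1 ≤ p) (hp' : p ≠ ⊤) {x : ℕ → X}
    (hx : WeaklyLpSummable p x) (φ : X →L[ℝ] ℝ) :
    Filter.Tendsto (fun n => φ (x n)) Filter.atTop (nhds 0) :=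
  aux_memℓp_tendsto_zero (aux_toReal_pos hp hp') ((aux_wls_iff hp').1 hx φ)

private lemma aux_wls_comp (hp : 1 ≤ p) (hp' : p ≠ ⊤) {x : ℕ → X}
    (hx : WeaklyLpSummable p x) {σ : ℕ → ℕ} (hσ : StrictMono σ) :
    WeaklyLpSummable p (fun n => x (σ n)) := by
  rw [aux_wls_iff hp'] at hx ⊢
  exact fun φ => aux_memℓp_comp (aux_toReal_pos hp hp') (hx φ) hσ

private lemma aux_wls_bounded [CompleteSpace X] (hp : 1 ≤ p) (hp' : p ≠ ⊤) {x : ℕ → X}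
    (hx : WeaklyLpSummable p x) : ∃ M : ℝ, 0 < M ∧ ∀ n, ‖x n‖ ≤ M := by
  have hpt : ∀ φ : StrongDual ℝ X, ∃ C, ∀ n,
      ‖(NormedSpace.inclusionInDoubleDual ℝ X (x n)) φ‖ ≤ C := by
    intro φ
    obtain ⟨C, hC⟩ := (aux_wls_tendsto hp hp' hx φ).norm.bddAbove_range
    exact ⟨C, fun n => by simpa using hC ⟨n, rfl⟩⟩
  obtain ⟨C', hC'⟩ := banach_steinhaus
    (g := fun n => NormedSpace.inclusionInDoubleDual ℝ X (x n)) hpt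
  refine ⟨max C' 0 + 1, by positivity, fun n => ?_⟩
  have hb : ‖x n‖ ≤ max C' 0 := by
    apply NormedSpace.norm_le_dual_bound ℝ (x n) (le_max_right _ _)
    intro φ
    calc ‖φ (x n)‖ = ‖(NormedSpace.inclusionInDoubleDual ℝ X (x n)) φ‖ := rfl
    _ ≤ ‖NormedSpace.inclusionInDoubleDual ℝ X (x n)‖ * ‖φ‖ :=
        (NormedSpace.inclusionInDoubleDual ℝ X (x n)).le_opNorm φ
    _ ≤ max C' 0 * ‖φ‖ :=
        mul_le_mul_of_nonneg_right ((hC' n).trans (le_max_left _ _)) (norm_nonneg _)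
  linarith

private lemma aux_wlc_comp {x : ℕ → X} (hx : WeaklyLpCauchy p x) {σ : ℕ → ℕ}
    (hσ : StrictMono σ) : WeaklyLpCauchy p (fun n => x (σ n)) :=
  fun m k hm hk => hx (σ ∘ m) (σ ∘ k) (hσ.comp hm) (hσ.comp hk)

private lemma aux_wlc_smul (hp' : p ≠ ⊤) (c : ℝ) {x : ℕ → X} (hx : WeaklyLpCauchy p x) :
    WeaklyLpCauchy p (fun n => c • x n) := by
  intro m k hm hk
  rw [aux_wls_iff hp']
  intro φ
  have h1 := (aux_wls_iff hp').1 (hx m k hm hk) φ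
  have h2 := h1.const_mul c
  have heq : (fun i => φ (c • x (m i) - c • x (k i))) =
      fun i => c * φ (x (m i) - x (k i)) := by
    funext i
    rw [← smul_sub, map_smul, smul_eq_mul]
  show Memℓp (fun i => φ (c • x (m i) - c • x (k i))) p
  rw [heq]
  exact h2

private lemma aux_half_mono {M : ℕ → ℕ} (h2 : ∀ i, M i + 2 ≤ M (i + 1)) :
    StrictMono fun i => M i / 2 := by
  apply strictMono_nat_of_lt_succ
  intro n
  have := h2 n
  omega

/-- Interleaving a weakly p-Cauchy sequence with a perturbation whose functional images are
in ℓp stays weakly p-Cauchy. -/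
private lemma aux_interleave_cauchy (hp : 1 ≤ p) (hp' : p ≠ ⊤) {v d : ℕ → X}
    (hv : WeaklyLpCauchy p v) (hd : ∀ φ : X →L[ℝ] ℝ, Memℓp (fun n => φ (d n)) p) :
    WeaklyLpCauchy p (fun n => v (n / 2) + (if Even n then 0 else d (n / 2))) := by
  have hq := aux_toReal_pos hp hp'
  intro m k hm hk
  rw [aux_wls_iff hp']
  intro φ
  set G : ℕ → ℝ := fun n => φ (v (n / 2)) + (if Even n then 0 else φ (d (n / 2))) with hG
  have key : ∀ M K : ℕ → ℕ, StrictMono (fun i => M i / 2) → StrictMono (fun i => K i / 2) →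
      Memℓp (fun i => G (M i) - G (K i)) p := by
    intro M K hM2 hK2
    have T1 : Memℓp (fun i => φ (v (M i / 2)) - φ (v (K i / 2))) p := by
      have h1 := (aux_wls_iff hp').1 (hv _ _ hM2 hK2) φ
      have heq : (fun i => φ (v (M i / 2) - v (K i / 2))) =
          fun i => φ (v (M i / 2)) - φ (v (K i / 2)) := by
        funext i; rw [map_sub]
      rwa [heq] at h1
    have TM : Memℓp (fun i => (if Even (M i) then (0:ℝ) else φ (d (M i / 2)))) p := by
      refine aux_memℓp_of_le hq (aux_memℓp_comp hq (hd φ) hM2) (fun n => ?_)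
      by_cases h : Even (M n) <;> simp [h]
    have TK : Memℓp (fun i => (if Even (K i) then (0:ℝ) else φ (d (K i / 2)))) p := by
      refine aux_memℓp_of_le hq (aux_memℓp_comp hq (hd φ) hK2) (fun n => ?_)
      by_cases h : Even (K n) <;> simp [h]
    have heq : (fun i => G (M i) - G (K i)) =
        fun i => (φ (v (M i / 2)) - φ (v (K i / 2))) +
          ((if Even (M i) then (0:ℝ) else φ (d (M i / 2))) -
            (if Even (K i) then (0:ℝ) else φ (d (K i / 2)))) := by
      funext i; simp only [hG]; ring
    rw [heq]
    exact aux_memℓp_add T1 (aux_memℓp_sub TM TK)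
  have hFG : (fun i => φ ((v (m i / 2) + (if Even (m i) then 0 else d (m i / 2))) -
      (v (k i / 2) + (if Even (k i) then 0 else d (k i / 2))))) =
      fun i => G (m i) - G (k i) := by
    funext i
    simp only [hG, map_sub, map_add, apply_ite φ, map_zero]
  show Memℓp (fun i => φ ((v (m i / 2) + (if Even (m i) then 0 else d (m i / 2))) -
      (v (k i / 2) + (if Even (k i) then 0 else d (k i / 2))))) p
  rw [hFG]
  have hme : StrictMono (fun i => m (2 * i) / 2) := by
    apply aux_half_mono
    intro i
    have h1 := hm (show 2 * i < 2 * i + 1 by omega)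
    have h2 := hm (show 2 * i + 1 < 2 * (i + 1) by omega)
    omega
  have hke : StrictMono (fun i => k (2 * i) / 2) := by
    apply aux_half_mono
    intro i
    have h1 := hk (show 2 * i < 2 * i + 1 by omega)
    have h2 := hk (show 2 * i + 1 < 2 * (i + 1) by omega)
    omega
  have hmo : StrictMono (fun i => m (2 * i + 1) / 2) := by
    apply aux_half_mono
    intro i
    have h1 := hm (show 2 * i + 1 < 2 * i + 2 by omega)
    have h2 := hm (show 2 * i + 2 < 2 * (i + 1) + 1 by omega)
    omega
  have hko : StrictMono (fun i => k (2 * i + 1) / 2) := by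
    apply aux_half_mono
    intro i
    have h1 := hk (show 2 * i + 1 < 2 * i + 2 by omega)
    have h2 := hk (show 2 * i + 2 < 2 * (i + 1) + 1 by omega)
    omega
  exact aux_memℓp_even_odd hq (key _ _ hme hke) (key _ _ hmo hko)

private lemma aux_ubounded_subset {U B B' : Set X} (h : UBounded U B) (hsub : B' ⊆ B) :
    UBounded U B' := by
  obtain ⟨h1, h2, r, hr, h3⟩ := h
  exact ⟨hsub.trans h1, h2.subset hsub, r, hr, fun b hb => h3 b (hsub hb)⟩

private lemma aux_ubounded_thicken {U B : Set X} (h : UBounded U B) :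
    ∃ r > 0, UBounded U (⋃ b ∈ B, Metric.closedBall b r) := by
  obtain ⟨h1, h2, r0, hr0, h3⟩ := h
  refine ⟨r0 / 2, by positivity, ?_, ?_, r0 / 2, by positivity, ?_⟩
  · intro x hx
    rw [Set.mem_iUnion₂] at hx
    obtain ⟨b, hb, hxb⟩ := hx
    apply h3 b hb
    rw [Metric.mem_ball]
    rw [Metric.mem_closedBall] at hxb
    linarith
  · obtain ⟨R, hR⟩ := isBounded_iff_forall_norm_le.1 h2
    rw [isBounded_iff_forall_norm_le]
    refine ⟨R + r0 / 2, fun x hx => ?_⟩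
    rw [Set.mem_iUnion₂] at hx
    obtain ⟨b, hb, hxb⟩ := hx
    rw [Metric.mem_closedBall, dist_eq_norm] at hxb
    calc ‖x‖ = ‖x - b + b‖ := by congr 1; abel
    _ ≤ ‖x - b‖ + ‖b‖ := norm_add_le _ _
    _ ≤ R + r0 / 2 := by have := hR b hb; linarith
  · intro b hb y hy
    rw [Set.mem_iUnion₂] at hb
    obtain ⟨b0, hb0, hbb0⟩ := hb
    apply h3 b0 hb0
    rw [Metric.mem_ball] at hy ⊢
    rw [Metric.mem_closedBall] at hbb0
    calc dist y b0 ≤ dist y b + dist b b0 := dist_triangle _ _ _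
    _ < r0 / 2 + r0 / 2 := by linarith
    _ = r0 := by ring

private lemma aux_mvt {U : Set X} {f : X → ℝ} {f' : X → X →L[ℝ] ℝ}
    (hdiff : ∀ x ∈ U, HasFDerivAt f (f' x) x)
    {w u : X} {δ : ℝ}
    (hseg : ∀ y ∈ segment ℝ w (w + u), y ∈ U)
    (hbound : ∀ y ∈ segment ℝ w (w + u), ‖f' y - f' w‖ ≤ δ) :
    |f (w + u) - f w - f' w u| ≤ δ * ‖u‖ := by
  have hconv : Convex ℝ (segment ℝ w (w + u)) := convex_segment _ _
  have hder : ∀ y ∈ segment ℝ w (w + u),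
      HasFDerivWithinAt (fun z => f z - f' w z) (f' y - f' w) (segment ℝ w (w + u)) y :=
    fun y hy => ((hdiff y (hseg y hy)).sub ((f' w).hasFDerivAt)).hasFDerivWithinAt
  have hmvt := hconv.norm_image_sub_le_of_norm_hasFDerivWithin_le hder hbound
      (left_mem_segment ℝ w (w + u)) (right_mem_segment ℝ w (w + u))
  have e1 : f' w (w + u) - f' w w = f' w u := by
    rw [← map_sub]; congr 1; abel
  have e2 : (w + u) - w = u := by abel
  rw [e2] at hmvt
  calc |f (w + u) - f w - f' w u|
      = ‖(f (w + u) - f' w (w + u)) - (f w - f' w w)‖ := by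
        rw [Real.norm_eq_abs]; congr 1; rw [← e1]; ring
  _ ≤ δ * ‖u‖ := hmvt

private lemma aux_extract_one {P : ℕ → ℕ → Prop} (h : ∀ N, ∃ j, N ≤ j ∧ ∃ n, P j n) :
    ∃ a b : ℕ → ℕ, StrictMono a ∧ ∀ t, P (a t) (b t) := by
  choose j hj n hn using h
  let θ : ℕ → ℕ := fun s => Nat.rec 0 (fun _ prev => j prev + 1) s
  refine ⟨fun s => j (θ s), fun s => n (θ s), strictMono_nat_of_lt_succ (fun s => ?_),
    fun t => hn (θ t)⟩
  have h1 := hj (θ (s + 1))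
  have h2 : θ (s + 1) = j (θ s) + 1 := rfl
  omega

private lemma aux_extract_pair {P : ℕ → ℕ → Prop}
    (h : ∀ N, ∃ i, N ≤ i ∧ ∃ j, N ≤ j ∧ P i j) :
    ∃ a b : ℕ → ℕ, StrictMono a ∧ StrictMono b ∧ ∀ t, P (a t) (b t) := by
  choose i hi j hj hP using h
  let θ : ℕ → ℕ := fun s => Nat.rec 0 (fun _ prev => max (i prev) (j prev) + 1) s
  have h2 : ∀ s, θ (s + 1) = max (i (θ s)) (j (θ s)) + 1 := fun _ => rfl
  refine ⟨fun s => i (θ s), fun s => j (θ s),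
    strictMono_nat_of_lt_succ (fun s => ?_), strictMono_nat_of_lt_succ (fun s => ?_),
    fun t => hP (θ t)⟩
  · have h3 := hi (θ (s + 1)); have h4 := h2 s; omega
  · have h3 := hj (θ (s + 1)); have h4 := h2 s; omega

end AuxLemmas

section CoreLemmas
set_option linter.unusedSectionVars false
set_option maxHeartbeats 1000000

variable {X : Type*} [NormedAddCommGroup X] [NormedSpace ℝ X] {p : ℝ≥0∞}

/-- Pointwise Cauchy property of the derivatives along a U-bounded weakly p-Cauchy sequence. -/
private lemma aux_pointwise_cauchy {U : Set X} {f : X → ℝ} {f' : X → X →L[ℝ] ℝ}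
    (hf : C1u U f f') (hwsc : WeaklyPSeqCont p U f)
    {B : Set X} (hB : UBounded U B) {w : ℕ → X} (hwB : ∀ n, w n ∈ B)
    (hwc : WeaklyLpCauchy p w) (h : X) :
    CauchySeq (fun n => f' (w n) h) := by
  rcases eq_or_ne h 0 with rfl | hh
  · simp only [map_zero]
    exact cauchySeq_const 0
  rw [Metric.cauchySeq_iff]
  intro ε hε
  obtain ⟨r, hr, hB2⟩ := aux_ubounded_thicken hB
  have hB2U : (⋃ b ∈ B, Metric.closedBall b r) ⊆ U := hB2.1
  have hucont := hf.2 _ hB2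
  rw [Metric.uniformContinuousOn_iff] at hucont
  set δ := ε / (4 * (‖h‖ + 1)) with hδdef
  have hδ : 0 < δ := by have := norm_nonneg h; positivity
  obtain ⟨η, hη, hucont⟩ := hucont δ hδ
  set t := min r (η / 2) / (‖h‖ + 1) with htdef
  have hnh : (0:ℝ) < ‖h‖ + 1 := by have := norm_nonneg h; linarith
  have ht : 0 < t := by
    apply div_pos _ hnh
    exact lt_min hr (by linarith)
  have hth : t * ‖h‖ ≤ min r (η / 2) := by
    have h1 : t * ‖h‖ ≤ t * (‖h‖ + 1) := by nlinarith [norm_nonneg h]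
    have h2 : t * (‖h‖ + 1) = min r (η / 2) := by
      rw [htdef, div_mul_cancel₀ _ (ne_of_gt hnh)]
    linarith
  have hthr : t * ‖h‖ ≤ r := hth.trans (min_le_left _ _)
  have hthη : t * ‖h‖ < η := lt_of_le_of_lt (hth.trans (min_le_right _ _)) (by linarith)
  have hmemB2 : ∀ n, w n ∈ ⋃ b ∈ B, Metric.closedBall b r :=
    fun n => Set.mem_iUnion₂.2 ⟨w n, hwB n, Metric.mem_closedBall_self hr.le⟩
  have hsegball : ∀ n, ∀ y ∈ segment ℝ (w n) (w n + t • h),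
      y ∈ Metric.closedBall (w n) (t * ‖h‖) := by
    intro n y hy
    refine (convex_closedBall (w n) (t * ‖h‖)).segment_subset
      (Metric.mem_closedBall_self (by positivity)) ?_ hy
    rw [Metric.mem_closedBall, dist_eq_norm, add_sub_cancel_left, norm_smul,
      Real.norm_eq_abs, abs_of_pos ht]
  have hmem : ∀ n, ∀ y ∈ segment ℝ (w n) (w n + t • h), y ∈ ⋃ b ∈ B, Metric.closedBall b r := by
    intro n y hy
    exact Set.mem_iUnion₂.2 ⟨w n, hwB n,
      Metric.closedBall_subset_closedBall hthr (hsegball n y hy)⟩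
  have hmvt : ∀ n, |f (w n + t • h) - f (w n) - f' (w n) (t • h)| ≤ δ * (t * ‖h‖) := by
    intro n
    have hm := aux_mvt hf.1 (w := w n) (u := t • h)
      (fun y hy => hB2U (hmem n y hy))
      (fun y hy => by
        have hd : dist y (w n) < η := by
          have := hsegball n y hy
          rw [Metric.mem_closedBall] at this
          linarith
        have := hucont y (hmem n y hy) (w n) (hmemB2 n) hd
        rw [dist_eq_norm] at this
        exact this.le)
    calc |f (w n + t • h) - f (w n) - f' (w n) (t • h)| ≤ δ * ‖t • h‖ := hm
    _ = δ * (t * ‖h‖) := by rw [norm_smul, Real.norm_eq_abs, abs_of_pos ht]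
  have hwU : UBoundedSeq U w :=
    aux_ubounded_subset hB (Set.range_subset_iff.2 hwB)
  obtain ⟨l₁, hl₁⟩ := hwsc w hwU hwc
  have hw2c : WeaklyLpCauchy p (fun n => w n + t • h) := by
    intro m k hm hk
    have heq : (fun i => (w (m i) + t • h) - (w (k i) + t • h)) =
        fun i => w (m i) - w (k i) := by funext i; abel
    show WeaklyLpSummable p (fun i => (w (m i) + t • h) - (w (k i) + t • h))
    rw [heq]
    exact hwc m k hm hk
  have hw2U : UBoundedSeq U (fun n => w n + t • h) := by
    apply aux_ubounded_subset hB2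
    rintro y ⟨n, rfl⟩
    refine Set.mem_iUnion₂.2 ⟨w n, hwB n, ?_⟩
    rw [Metric.mem_closedBall, dist_eq_norm, add_sub_cancel_left, norm_smul,
      Real.norm_eq_abs, abs_of_pos ht]
    exact hthr
  obtain ⟨l₂, hl₂⟩ := hwsc _ hw2U hw2c
  have hD : CauchySeq (fun n => f (w n + t • h) - f (w n)) := (hl₂.sub hl₁).cauchySeq
  rw [Metric.cauchySeq_iff] at hD
  obtain ⟨N, hN⟩ := hD (t * (ε / 4)) (by positivity)
  refine ⟨N, fun a ha b hb => ?_⟩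
  have e1 := hmvt a
  have e2 := hmvt b
  have e3 := hN a ha b hb
  rw [Real.dist_eq] at e3
  rw [Real.dist_eq]
  simp only [map_smul, smul_eq_mul] at e1 e2
  have hδh : δ * ‖h‖ ≤ ε / 4 := by
    have h1 : δ * (‖h‖ + 1) = ε / 4 := by
      rw [hδdef]
      field_simp
    nlinarith
  have key : t * |f' (w a) h - f' (w b) h| ≤ 2 * (δ * (t * ‖h‖)) + t * (ε / 4) := by
    have habs : t * |f' (w a) h - f' (w b) h| = |t * f' (w a) h - t * f' (w b) h| := by
      rw [← mul_sub, abs_mul, abs_of_pos ht]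
    rw [habs]
    have tri1 : |t * f' (w a) h - t * f' (w b) h| ≤
        |t * f' (w a) h - (f (w a + t • h) - f (w a))| +
        |(f (w a + t • h) - f (w a)) - (f (w b + t • h) - f (w b))| +
        |(f (w b + t • h) - f (w b)) - t * f' (w b) h| := by
      have := abs_sub_le (t * f' (w a) h) (f (w a + t • h) - f (w a)) (t * f' (w b) h)
      have h2 := abs_sub_le (f (w a + t • h) - f (w a)) (f (w b + t • h) - f (w b))
        (t * f' (w b) h)
      linarith
    have q1 : |t * f' (w a) h - (f (w a + t • h) - f (w a))| ≤ δ * (t * ‖h‖) := by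
      rw [abs_sub_comm]
      calc |(f (w a + t • h) - f (w a)) - t * f' (w a) h|
          = |f (w a + t • h) - f (w a) - t * f' (w a) h| := by ring_nf
      _ ≤ δ * (t * ‖h‖) := e1
    have q3 : |(f (w b + t • h) - f (w b)) - t * f' (w b) h| ≤ δ * (t * ‖h‖) := by
      calc |(f (w b + t • h) - f (w b)) - t * f' (w b) h|
          = |f (w b + t • h) - f (w b) - t * f' (w b) h| := by ring_nf
      _ ≤ δ * (t * ‖h‖) := e2
    linarith
  have hfin : t * |f' (w a) h - f' (w b) h| < t * ε := by
    have : 2 * (δ * (t * ‖h‖)) ≤ 2 * (t * (ε / 4)) := by nlinarith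
    nlinarith
  exact lt_of_mul_lt_mul_left hfin ht.le

/-- The set of derivatives along a U-bounded weakly p-Cauchy sequence is uniformly
p-convergent. -/
private lemma aux_unif_p_conv [CompleteSpace X] (hp : 1 ≤ p) (hp' : p ≠ ⊤)
    {U : Set X} {f : X → ℝ} {f' : X → X →L[ℝ] ℝ}
    (hf : C1u U f f') (hwsc : WeaklyPSeqCont p U f)
    {B : Set X} (hB : UBounded U B) {w : ℕ → X} (hwB : ∀ n, w n ∈ B)
    (hwc : WeaklyLpCauchy p w) :
    UniformlyPConvergent p (Set.range fun n => f' (w n)) := by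
  intro z hz ε hε
  by_contra hcon
  push_neg at hcon
  have hcon' : ∀ N, ∃ j, N ≤ j ∧ ∃ m, ε ≤ |f' (w m) (z j)| := by
    intro N
    obtain ⟨j, hj, T, hT, hle⟩ := hcon N
    obtain ⟨m, rfl⟩ := hT
    exact ⟨j, hj, m, by simpa [Real.norm_eq_abs] using hle⟩
  obtain ⟨a, b, ha, hab⟩ := aux_extract_one hcon'
  by_cases hinf : ∃ n₀, {t | b t = n₀}.Infinite
  · obtain ⟨n₀, hn₀⟩ := hinf
    have htend := aux_wls_tendsto hp hp' hz (f' (w n₀))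
    rw [Metric.tendsto_atTop] at htend
    obtain ⟨M, hM⟩ := htend ε hε
    have hex : ∃ t ∈ {t | b t = n₀}, M ≤ t := by
      by_contra hno
      push_neg at hno
      refine hn₀ ((Set.finite_Iio M).subset ?_)
      intro t ht
      exact hno t ht
    obtain ⟨t, htmem, htM⟩ := hex
    have h1 := hab t
    rw [Set.mem_setOf_eq] at htmem
    rw [htmem] at h1
    have h2 := hM (a t) (le_trans htM ha.le_apply)
    rw [Real.dist_eq, sub_zero] at h2
    linarith
  · push_neg at hinf
    have hfin : ∀ n₀, {t | b t = n₀}.Finite := fun n₀ => hinf n₀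
    have claim : ∀ T C : ℕ, ∃ t, T ≤ t ∧ C < b t := by
      intro T C
      have hfin2 : {t | b t ≤ C}.Finite := by
        have hsub : {t | b t ≤ C} ⊆ ⋃ n₀ ∈ Set.Iic C, {t | b t = n₀} := by
          intro t ht
          exact Set.mem_iUnion₂.2 ⟨b t, ht, rfl⟩
        exact (Set.Finite.biUnion (Set.finite_Iic C) (fun n₀ _ => hfin n₀)).subset hsub
      obtain ⟨M2, hM2⟩ := hfin2.bddAbove
      refine ⟨max T (M2 + 1), le_max_left _ _, ?_⟩
      by_contra hle
      push_neg at hle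
      have hmem : max T (M2 + 1) ∈ {t | b t ≤ C} := hle
      have := hM2 hmem
      have h5 : M2 + 1 ≤ max T (M2 + 1) := le_max_right _ _
      omega
    choose g hg1 hg2 using claim
    set θ : ℕ → ℕ := fun s => Nat.rec 0 (fun _ prev => g (prev + 1) (b prev)) s with hθdef
    have hθ : ∀ s, θ (s + 1) = g (θ s + 1) (b (θ s)) := fun _ => rfl
    have hθmono : StrictMono θ := strictMono_nat_of_lt_succ (fun s => by
      have h1 := hg1 (θ s + 1) (b (θ s))
      rw [hθ]
      omega)
    have hbθ : StrictMono (fun s => b (θ s)) := strictMono_nat_of_lt_succ (fun s => by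
      have h1 := hg2 (θ s + 1) (b (θ s))
      show b (θ s) < b (θ (s + 1))
      rw [hθ]
      exact h1)
    set v : ℕ → X := fun s => w (b (θ s)) with hvdef
    set ζ : ℕ → X := fun s => z (a (θ s)) with hζdef
    have hvB : ∀ s, v s ∈ B := fun s => hwB _
    have hvc : WeaklyLpCauchy p v := aux_wlc_comp hwc hbθ
    have hζs : WeaklyLpSummable p ζ := aux_wls_comp hp hp' hz (ha.comp hθmono)
    have hεs : ∀ s, ε ≤ |f' (v s) (ζ s)| := fun s => hab (θ s)
    obtain ⟨M, hM0, hMb⟩ := aux_wls_bounded hp hp' hζs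
    obtain ⟨r, hr, hB2⟩ := aux_ubounded_thicken hB
    have hB2U : (⋃ b ∈ B, Metric.closedBall b r) ⊆ U := hB2.1
    have hucont := hf.2 _ hB2
    rw [Metric.uniformContinuousOn_iff] at hucont
    obtain ⟨η, hη, hucont⟩ := hucont (ε / (4 * M)) (by positivity)
    set t := min r (η / 2) / M with htdef
    have ht : 0 < t := div_pos (lt_min hr (by linarith)) hM0
    have htM : t * M ≤ min r (η / 2) := by
      rw [htdef, div_mul_cancel₀ _ (ne_of_gt hM0)]
    have htζ : ∀ s, ‖t • ζ s‖ ≤ t * M := by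
      intro s
      rw [norm_smul, Real.norm_eq_abs, abs_of_pos ht]
      exact mul_le_mul_of_nonneg_left (hMb s) ht.le
    have htζr : ∀ s, ‖t • ζ s‖ ≤ r := fun s => (htζ s).trans (htM.trans (min_le_left _ _))
    have htζη : ∀ s, ‖t • ζ s‖ < η := fun s =>
      lt_of_le_of_lt ((htζ s).trans (htM.trans (min_le_right _ _))) (by linarith)
    have hmemB2 : ∀ s, v s ∈ ⋃ b ∈ B, Metric.closedBall b r :=
      fun s => Set.mem_iUnion₂.2 ⟨v s, hvB s, Metric.mem_closedBall_self hr.le⟩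
    have hsegball : ∀ s, ∀ y ∈ segment ℝ (v s) (v s + t • ζ s),
        y ∈ Metric.closedBall (v s) ‖t • ζ s‖ := by
      intro s y hy
      refine (convex_closedBall (v s) ‖t • ζ s‖).segment_subset
        (Metric.mem_closedBall_self (norm_nonneg _)) ?_ hy
      rw [Metric.mem_closedBall, dist_eq_norm, add_sub_cancel_left]
    have hmem : ∀ s, ∀ y ∈ segment ℝ (v s) (v s + t • ζ s),
        y ∈ ⋃ b ∈ B, Metric.closedBall b r := by
      intro s y hy
      exact Set.mem_iUnion₂.2 ⟨v s, hvB s,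
        Metric.closedBall_subset_closedBall (htζr s) (hsegball s y hy)⟩
    have hmvt : ∀ s, |f (v s + t • ζ s) - f (v s) - f' (v s) (t • ζ s)| ≤ t * (ε / 4) := by
      intro s
      have hm := aux_mvt hf.1 (w := v s) (u := t • ζ s)
        (fun y hy => hB2U (hmem s y hy))
        (fun y hy => by
          have hd : dist y (v s) < η := by
            have := hsegball s y hy
            rw [Metric.mem_closedBall] at this
            exact lt_of_le_of_lt this (htζη s)
          have := hucont y (hmem s y hy) (v s) (hmemB2 s) hd
          rw [dist_eq_norm] at this
          exact this.le)
      calc |f (v s + t • ζ s) - f (v s) - f' (v s) (t • ζ s)|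
          ≤ ε / (4 * M) * ‖t • ζ s‖ := hm
      _ ≤ ε / (4 * M) * (t * M) := by
          apply mul_le_mul_of_nonneg_left (htζ s) (by positivity)
      _ = t * (ε / 4) := by field_simp
    -- interleaved sequence
    set u : ℕ → X := fun n => v (n / 2) + (if Even n then 0 else t • ζ (n / 2)) with hudef
    have huc : WeaklyLpCauchy p u := by
      apply aux_interleave_cauchy (v := v) (d := fun s => t • ζ s) hp hp' hvc
      intro φ
      have h1 := (aux_wls_iff hp').1 hζs φ
      have h2 := h1.const_mul t
      have heq : (fun n => φ (t • ζ n)) = fun n => t * φ (ζ n) := by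
        funext n; rw [map_smul, smul_eq_mul]
      rw [heq]
      exact h2
    have huU : UBoundedSeq U u := by
      apply aux_ubounded_subset hB2
      rintro y ⟨n, rfl⟩
      refine Set.mem_iUnion₂.2 ⟨v (n / 2), hvB _, ?_⟩
      rw [Metric.mem_closedBall]
      by_cases he : Even n
      · simp only [hudef, if_pos he, add_zero]
        rw [dist_self]
        exact hr.le
      · simp only [hudef, if_neg he]
        rw [dist_eq_norm, add_sub_cancel_left]
        exact htζr _
    obtain ⟨l, hl⟩ := hwsc u huU huc
    have htwo : StrictMono (fun s : ℕ => 2 * s) := fun x y hxy => by dsimp only; omega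
    have htwo1 : StrictMono (fun s : ℕ => 2 * s + 1) := fun x y hxy => by dsimp only; omega
    have h2s : Filter.Tendsto (fun s => f (u (2 * s))) Filter.atTop (nhds l) :=
      hl.comp htwo.tendsto_atTop
    have h2s1 : Filter.Tendsto (fun s => f (u (2 * s + 1))) Filter.atTop (nhds l) :=
      hl.comp htwo1.tendsto_atTop
    have hueven : ∀ s, u (2 * s) = v s := by
      intro s
      have hdiv : 2 * s / 2 = s := by omega
      simp only [hudef, hdiv, if_pos (even_two_mul s), add_zero]
    have huodd : ∀ s, u (2 * s + 1) = v s + t • ζ s := by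
      intro s
      have hdiv : (2 * s + 1) / 2 = s := by omega
      have hodd : ¬ Even (2 * s + 1) := by
        rw [Nat.even_iff]
        omega
      simp only [hudef, hdiv, if_neg hodd]
    have hDtend : Filter.Tendsto (fun s => f (v s + t • ζ s) - f (v s))
        Filter.atTop (nhds 0) := by
      have := h2s1.sub h2s
      rw [sub_self] at this
      simp only [hueven, huodd] at this
      exact this
    rw [Metric.tendsto_atTop] at hDtend
    obtain ⟨S, hS⟩ := hDtend (3 / 4 * (t * ε)) (by positivity)
    have h1 := hS S le_rfl
    rw [Real.dist_eq, sub_zero] at h1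
    have h2 := hmvt S
    have h3 := hεs S
    have h4 : t * ε ≤ |t * f' (v S) (ζ S)| := by
      rw [abs_mul, abs_of_pos ht]
      exact mul_le_mul_of_nonneg_left h3 ht.le
    have h5 : f' (v S) (t • ζ S) = t * f' (v S) (ζ S) := by
      rw [map_smul, smul_eq_mul]
    rw [h5] at h2
    have h6 : |t * f' (v S) (ζ S)| ≤
        |f (v S + t • ζ S) - f (v S) - t * f' (v S) (ζ S)| +
        |f (v S + t • ζ S) - f (v S)| := by
      have := abs_sub_abs_le_abs_sub (t * f' (v S) (ζ S))
        (f (v S + t • ζ S) - f (v S))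
      have habs : |t * f' (v S) (ζ S) - (f (v S + t • ζ S) - f (v S))| =
          |f (v S + t • ζ S) - f (v S) - t * f' (v S) (ζ S)| := by
        rw [abs_sub_comm]
      linarith [abs_nonneg (f (v S + t • ζ S) - f (v S))]
    nlinarith

/-- Small differences uniformly over a uniformly p-convergent set along a weakly p-Cauchy
sequence. -/
private lemma aux_unif_small_diff {K : Set (X →L[ℝ] ℝ)} (hK : UniformlyPConvergent p K)
    {h : ℕ → X} (hh : WeaklyLpCauchy p h) {δ : ℝ} (hδ : 0 < δ) :
    ∃ N, ∀ i, N ≤ i → ∀ j, N ≤ j → ∀ φ ∈ K, |φ (h i) - φ (h j)| < δ := by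
  by_contra hcon
  push_neg at hcon
  have hcon' : ∀ N, ∃ i, N ≤ i ∧ ∃ j, N ≤ j ∧ ∃ φ ∈ K, δ ≤ |φ (h i) - φ (h j)| := by
    intro N
    obtain ⟨i, hi, j, hj, φ, hφ, hle⟩ := hcon N
    exact ⟨i, hi, j, hj, φ, hφ, hle⟩
  obtain ⟨a, b, ha, hb, hP⟩ := aux_extract_pair hcon'
  have hsum : WeaklyLpSummable p (fun i => h (a i) - h (b i)) := hh a b ha hb
  obtain ⟨N, hN⟩ := hK _ hsum δ hδ
  obtain ⟨φ, hφ, hle⟩ := hP N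
  have := hN N le_rfl φ hφ
  rw [map_sub, Real.norm_eq_abs] at this
  linarith

/-- Main Cauchy lemma: the derivatives along a U-bounded weakly p-Cauchy sequence form a
norm-Cauchy sequence. -/
private lemma aux_deriv_cauchy [CompleteSpace X] (hp : 1 ≤ p) (hp' : p ≠ ⊤)
    (hball : WeaklyPPrecompact p (Metric.closedBall (0 : X) 1))
    {U : Set X} {f : X → ℝ} {f' : X → X →L[ℝ] ℝ}
    (hf : C1u U f f') (hwsc : WeaklyPSeqCont p U f)
    {B : Set X} (hB : UBounded U B) {w : ℕ → X} (hwB : ∀ n, w n ∈ B)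
    (hwc : WeaklyLpCauchy p w) :
    CauchySeq (fun n => f' (w n)) := by
  rw [Metric.cauchySeq_iff]
  by_contra hcon
  push_neg at hcon
  obtain ⟨ε, hε, hcon⟩ := hcon
  have hcon' : ∀ N, ∃ i, N ≤ i ∧ ∃ j, N ≤ j ∧ ε ≤ dist (f' (w i)) (f' (w j)) := by
    intro N
    obtain ⟨i, hi, j, hj, hd⟩ := hcon N
    exact ⟨i, hi, j, hj, hd⟩
  obtain ⟨a, b, ha, hb, hab⟩ := aux_extract_pair hcon'
  have hvec : ∀ t, ∃ x : X, ‖x‖ < 1 ∧ ε / 2 < ‖(f' (w (a t)) - f' (w (b t))) x‖ := by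
    intro t
    apply ContinuousLinearMap.exists_lt_apply_of_lt_opNorm
    rw [← dist_eq_norm]
    calc ε / 2 < ε := by linarith
    _ ≤ dist (f' (w (a t))) (f' (w (b t))) := hab t
  choose h hh1 hh2 using hvec
  have hhball : ∀ t, h t ∈ Metric.closedBall (0 : X) 1 := fun t => by
    rw [Metric.mem_closedBall, dist_zero_right]
    exact (hh1 t).le
  obtain ⟨σ, hσ, hσc⟩ := hball h hhball
  have hK := aux_unif_p_conv hp hp' hf hwsc hB hwB hwc
  obtain ⟨N₁, hN₁⟩ := aux_unif_small_diff hK hσc (show (0:ℝ) < ε / 8 by linarith)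
  have hptw := aux_pointwise_cauchy hf hwsc hB hwB hwc (h (σ N₁))
  rw [Metric.cauchySeq_iff] at hptw
  obtain ⟨N₂, hN₂⟩ := hptw (ε / 8) (by linarith)
  set s := max N₁ N₂ with hsdef
  set φ₁ := f' (w (a (σ s))) with hφ₁
  set φ₂ := f' (w (b (σ s))) with hφ₂
  have hm1 : φ₁ ∈ Set.range fun n => f' (w n) := ⟨a (σ s), rfl⟩
  have hm2 : φ₂ ∈ Set.range fun n => f' (w n) := ⟨b (σ s), rfl⟩
  have hq1 : |φ₁ (h (σ s)) - φ₁ (h (σ N₁))| < ε / 8 :=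
    hN₁ s (le_max_left _ _) N₁ le_rfl φ₁ hm1
  have hq3 : |φ₂ (h (σ N₁)) - φ₂ (h (σ s))| < ε / 8 :=
    hN₁ N₁ le_rfl s (le_max_left _ _) φ₂ hm2
  have haN₂ : N₂ ≤ a (σ s) := by
    have h1 : s ≤ σ s := hσ.le_apply
    have h2 : σ s ≤ a (σ s) := ha.le_apply
    have h3 : N₂ ≤ s := le_max_right _ _
    omega
  have hbN₂ : N₂ ≤ b (σ s) := by
    have h1 : s ≤ σ s := hσ.le_apply
    have h2 : σ s ≤ b (σ s) := hb.le_apply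
    have h3 : N₂ ≤ s := le_max_right _ _
    omega
  have hq2 : |φ₁ (h (σ N₁)) - φ₂ (h (σ N₁))| < ε / 8 := by
    have := hN₂ (a (σ s)) haN₂ (b (σ s)) hbN₂
    rw [Real.dist_eq] at this
    exact this
  have hbig := hh2 (σ s)
  rw [ContinuousLinearMap.sub_apply, Real.norm_eq_abs] at hbig
  have htri : |φ₁ (h (σ s)) - φ₂ (h (σ s))| ≤
      |φ₁ (h (σ s)) - φ₁ (h (σ N₁))| + |φ₁ (h (σ N₁)) - φ₂ (h (σ N₁))| +
      |φ₂ (h (σ N₁)) - φ₂ (h (σ s))| := by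
    have t1 := abs_sub_le (φ₁ (h (σ s))) (φ₁ (h (σ N₁))) (φ₂ (h (σ s)))
    have t2 := abs_sub_le (φ₁ (h (σ N₁))) (φ₂ (h (σ N₁))) (φ₂ (h (σ s)))
    linarith
  linarith

end CoreLemmas

/-- If `B_X` is weakly `p`-precompact, `f ∈ C^{1u}(U,ℝ)` is weakly `p`-sequentially
continuous, and every uniformly `p`-convergent subset of `X* = K(X,ℝ)` is uniformly
completely continuous (an `(L)`-set), then `f'` maps `U`-bounded sets into relatively
compact subsets of `X*`. -/
theorem deriv_relatively_compact_of_Lsets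
    {X : Type*} [NormedAddCommGroup X] [NormedSpace ℝ X] [CompleteSpace X]
    (p : ℝ≥0∞) (hp : 1 ≤ p) (hp' : p ≠ ⊤)
    (hball : WeaklyPPrecompact p (Metric.closedBall (0 : X) 1))
    (U : Set X) (hU : IsOpen U) (hUc : Convex ℝ U)
    (f : X → ℝ) (f' : X → X →L[ℝ] ℝ) (hf : C1u U f f')
    (hwsc : WeaklyPSeqCont p U f)
    (hLsets : ∀ K : Set (X →L[ℝ] ℝ), UniformlyPConvergent p K →
      ∀ x : ℕ → X,
        (∀ φ : X →L[ℝ] ℝ, Filter.Tendsto (fun n => φ (x n)) Filter.atTop (nhds 0)) →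
        ∀ ε > 0, ∃ N : ℕ, ∀ n ≥ N, ∀ φ ∈ K, |φ (x n)| < ε) :
    ∀ B : Set X, UBounded U B → IsCompact (closure (f' '' B)) := by
  intro B hB
  have htb : TotallyBounded (f' '' B) := by
    rw [totallyBounded_iff]
    by_contra hcon
    push_neg at hcon
    obtain ⟨ε, hε, hcov⟩ := hcon
    have hstep : ∀ s : Finset (X →L[ℝ] ℝ), (∀ x ∈ s, x ∈ f' '' B) →
        ∃ z, z ∈ f' '' B ∧ ∀ x ∈ s, ε ≤ dist x z := by
      intro s _
      have hns := hcov ↑s s.finite_toSet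
      rw [Set.not_subset] at hns
      obtain ⟨z, hz1, hz2⟩ := hns
      refine ⟨z, hz1, fun x hx => ?_⟩
      by_contra hlt
      push_neg at hlt
      exact hz2 (Set.mem_iUnion₂.2 ⟨x, hx, by rwa [Metric.mem_ball, dist_comm]⟩)
    obtain ⟨g, hgmem, hgsep⟩ := exists_seq_of_forall_finset_exists
      (fun y => y ∈ f' '' B) (fun x y => ε ≤ dist x y) hstep
    have hgmem' : ∀ n, ∃ x, x ∈ B ∧ f' x = g n := by
      intro n
      obtain ⟨x, hx1, hx2⟩ := hgmem n
      exact ⟨x, hx1, hx2⟩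
    choose y hyB hyg using hgmem'
    obtain ⟨R, hR⟩ := isBounded_iff_forall_norm_le.1 hB.2.1
    have hR0 : 0 ≤ R := le_trans (norm_nonneg _) (hR _ (hyB 0))
    have hR1 : (0:ℝ) < R + 1 := by linarith
    have hsc : ∀ n, (R + 1)⁻¹ • y n ∈ Metric.closedBall (0 : X) 1 := by
      intro n
      rw [Metric.mem_closedBall, dist_zero_right, norm_smul, Real.norm_eq_abs,
        abs_of_pos (by positivity)]
      have h1 := hR _ (hyB n)
      rw [inv_mul_le_iff₀ hR1]
      linarith
    obtain ⟨σ, hσ, hσc⟩ := hball (fun n => (R + 1)⁻¹ • y n) hsc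
    have hyc : WeaklyLpCauchy p (fun i => y (σ i)) := by
      have h1 := aux_wlc_smul hp' (R + 1) hσc
      have heq : (fun n => (R + 1) • ((fun i => (R + 1)⁻¹ • y (σ i)) n)) =
          fun n => y (σ n) := by
        funext n
        show (R + 1) • ((R + 1)⁻¹ • y (σ n)) = y (σ n)
        rw [smul_inv_smul₀ (ne_of_gt hR1)]
      rwa [heq] at h1
    have hcs := aux_deriv_cauchy hp hp' hball hf hwsc hB
      (fun i => hyB (σ i)) hyc
    have hgs : (fun i => f' (y (σ i))) = fun i => g (σ i) :=
      funext (fun i => hyg (σ i))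
    rw [hgs, Metric.cauchySeq_iff] at hcs
    obtain ⟨N, hN⟩ := hcs ε hε
    have hlt := hN N le_rfl (N + 1) (by omega)
    have hsep := hgsep (σ N) (σ (N + 1)) (hσ (by omega))
    linarith
  exact TotallyBounded.isCompact_of_isClosed htb.closure isClosed_closure
end
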